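/- Let f : [0,∞) → ℝ be non-decreasing, concave, f(0) = 0. For Z ∈ ℝ^{d×n} and a column-stochastic-rows assignment matrix Π ∈ ℝ^{n×K} with columns π_k, n_k = ⟨π_k, 1⟩ > 0, define R_{c,f}(Z,Π) = (1/2) ∑_k (n_k/n) ∑_i f(λ_i((1/n_k) Z Diag(π_k) Zᵀ)) and R^var_{c,f}(Z,Π | {U_k}) = (1/2) ∑_k (n_k/n) ∑_{i=1}^p f((1/n_k)(U_kᵀ Z Diag(π_k) Zᵀ U_k)_{ii}). If U_1,…,U_K ∈ O(d,p) satisfy image(Z Diag(π_k) Zᵀ) ⊆ image(U_k) for all k, then R_{c,f}(Z,Π) ≤ R^var_{c,f}(Z,Π | {U_k}). -/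

import Mathlib

open Matrix BigOperators


lemma key {d p : ℕ} (f : ℝ → ℝ)
    (hconc : ConcaveOn ℝ (Set.Ici 0) f) (hf0 : f 0 = 0)
    (S : Matrix (Fin d) (Fin d) ℝ) (hpsd : S.PosSemidef)
    (h : S.IsHermitian)
    (U : Matrix (Fin d) (Fin p) ℝ) (hU : Uᵀ * U = 1)
    (hrange : LinearMap.range S.mulVecLin ≤ LinearMap.range U.mulVecLin) :
    ∑ i, f (h.eigenvalues i) ≤ ∑ i : Fin p, f ((Uᵀ * S * U) i i) := by
  classical
  set W : Matrix (Fin d) (Fin d) ℝ := (h.eigenvectorUnitary : Matrix (Fin d) (Fin d) ℝ) with hW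
  set lam := h.eigenvalues with hlam
  have hWW : W * star W = 1 := (Matrix.mem_unitaryGroup_iff).mp h.eigenvectorUnitary.2
  have hWW' : star W * W = 1 := (Matrix.mem_unitaryGroup_iff').mp h.eigenvectorUnitary.2
  have hstarW : star W = Wᵀ := by
    ext i j; simp [Matrix.star_apply]
  have hspec : S = W * diagonal lam * Wᵀ := by
    rw [← hstarW]
    have := h.spectral_theorem
    simpa using this
  set B : Matrix (Fin p) (Fin d) ℝ := Uᵀ * W with hB
  -- entry formula
  have hentry : ∀ i : Fin p, (Uᵀ * S * U) i i = ∑ j, (B i j)^2 * lam j := by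
    intro i
    have hm : Uᵀ * S * U = B * diagonal lam * Bᵀ := by
      rw [hspec]
      simp only [hB, Matrix.transpose_mul, Matrix.transpose_transpose, Matrix.mul_assoc]
    rw [hm]
    rw [Matrix.mul_assoc, Matrix.mul_apply]
    congr 1; ext j
    simp [Matrix.mul_apply, Matrix.diagonal, Matrix.transpose_apply]
    ring
  -- row sums
  have hrow : ∀ i : Fin p, ∑ j, (B i j)^2 = 1 := by
    intro i
    have hBB : B * Bᵀ = 1 := by
      simp only [hB, Matrix.transpose_mul, Matrix.transpose_transpose]
      rw [← hstarW, Matrix.mul_assoc, ← Matrix.mul_assoc W, hWW, Matrix.one_mul, hU]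
    have := congrArg (fun M => M i i) hBB
    simpa [Matrix.mul_apply, pow_two] using this
  have hev : ∀ j, 0 ≤ lam j := hpsd.eigenvalues_nonneg
  -- column fact
  have hcol : ∀ j : Fin d, lam j ≠ 0 → ∑ i : Fin p, (B i j)^2 = 1 := by
    intro j hj
    set v : Fin d → ℝ := fun a => W a j with hv
    have hSv : S *ᵥ v = lam j • v := by
      have h1 := h.mulVec_eigenvectorBasis j
      have h2 : v = ⇑(h.eigenvectorBasis j) := by
        ext a; rw [hv]; exact h.eigenvectorUnitary_apply a j
      rw [h2]; simpa using h1
    have hvrange : v ∈ LinearMap.range S.mulVecLin := by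
      refine ⟨(lam j)⁻¹ • v, ?_⟩
      simp [Matrix.mulVecLin_apply, Matrix.mulVec_smul, hSv, smul_smul,
        inv_mul_cancel₀ hj]
    obtain ⟨x, hx⟩ := hrange hvrange
    simp only [Matrix.mulVecLin_apply] at hx
    have hBx : ∀ i, B i j = x i := by
      intro i
      have hBi : B i j = (Uᵀ *ᵥ v) i := by
        simp [hB, Matrix.mul_apply, Matrix.mulVec, dotProduct, hv]
      rw [hBi, ← hx, Matrix.mulVec_mulVec, hU, Matrix.one_mulVec]
    have hvv : v ⬝ᵥ v = 1 := by
      have := congrArg (fun M => M j j) hWW'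
      simpa [Matrix.mul_apply, hstarW, dotProduct, hv, mul_comm] using this
    have hxx : x ⬝ᵥ x = 1 := by
      have h3 : x ⬝ᵥ (Uᵀ *ᵥ (U *ᵥ x)) = (U *ᵥ x) ⬝ᵥ (U *ᵥ x) := by
        rw [Matrix.dotProduct_mulVec, Matrix.vecMul_transpose]
      rw [Matrix.mulVec_mulVec, hU, Matrix.one_mulVec, hx] at h3
      exact h3.trans hvv
    calc ∑ i : Fin p, (B i j)^2 = x ⬝ᵥ x := by
          simp [hBx, pow_two, dotProduct]
      _ = 1 := hxx
  -- main chain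
  calc ∑ j, f (lam j)
      = ∑ j, (∑ i : Fin p, (B i j)^2) * f (lam j) := by
        apply Finset.sum_congr rfl
        intro j _
        by_cases hj : lam j = 0
        · simp [hj, hf0]
        · rw [hcol j hj, one_mul]
    _ = ∑ i : Fin p, ∑ j, (B i j)^2 * f (lam j) := by
        rw [Finset.sum_comm]
        simp [Finset.sum_mul]
    _ ≤ ∑ i : Fin p, f (∑ j, (B i j)^2 * lam j) := by
        apply Finset.sum_le_sum
        intro i _
        have := hconc.le_map_sum (t := Finset.univ) (w := fun j => (B i j)^2)
          (p := lam) (fun j _ => sq_nonneg _) (hrow i) (fun j _ => hev j)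
        simpa [smul_eq_mul] using this
    _ = ∑ i : Fin p, f ((Uᵀ * S * U) i i) := by
        apply Finset.sum_congr rfl
        intro i _
        rw [hentry]


theorem stmt16 {d n p K : ℕ} (hn : 0 < n)
    (f : ℝ → ℝ) (hmono : MonotoneOn f (Set.Ici 0))
    (hconc : ConcaveOn ℝ (Set.Ici 0) f) (hf0 : f 0 = 0)
    (Z : Matrix (Fin d) (Fin n) ℝ) (P : Matrix (Fin n) (Fin K) ℝ)
    (hPnn : ∀ j k, 0 ≤ P j k) (hProw : ∀ j, ∑ k, P j k = 1)
    (hnk : ∀ k, 0 < ∑ j, P j k)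
    (U : Fin K → Matrix (Fin d) (Fin p) ℝ) (hU : ∀ k, (U k)ᵀ * U k = 1)
    (hrange : ∀ k,
      LinearMap.range (Z * Matrix.diagonal (fun j => P j k) * Zᵀ).mulVecLin ≤
        LinearMap.range (U k).mulVecLin)
    (hH : ∀ k,
      ((∑ j, P j k)⁻¹ • (Z * Matrix.diagonal (fun j => P j k) * Zᵀ)).IsHermitian) :
    (1 / 2) * ∑ k, ((∑ j, P j k) / n) * ∑ i, f ((hH k).eigenvalues i) ≤
      (1 / 2) * ∑ k, ((∑ j, P j k) / n) * ∑ i : Fin p,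
        f ((∑ j, P j k)⁻¹ *
          ((U k)ᵀ * (Z * Matrix.diagonal (fun j => P j k) * Zᵀ) * U k) i i) := by
  apply mul_le_mul_of_nonneg_left _ (by norm_num : (0:ℝ) ≤ 1/2)
  apply Finset.sum_le_sum
  intro k _
  apply mul_le_mul_of_nonneg_left _ (div_nonneg (hnk k).le (Nat.cast_nonneg n))
  set M : Matrix (Fin d) (Fin d) ℝ := Z * Matrix.diagonal (fun j => P j k) * Zᵀ with hM
  set c : ℝ := (∑ j, P j k)⁻¹ with hc
  have hc0 : 0 < c := inv_pos.mpr (hnk k)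
  have hMpsd : M.PosSemidef := by
    have hD : (Matrix.diagonal (fun j => P j k)).PosSemidef :=
      Matrix.posSemidef_diagonal_iff.mpr fun j => hPnn j k
    have := hD.mul_mul_conjTranspose_same Z
    rwa [Matrix.conjTranspose_eq_transpose_of_trivial] at this
  have hSpsd : (c • M).PosSemidef := by
    exact hMpsd.smul hc0.le
  have hr : LinearMap.range (c • M).mulVecLin ≤ LinearMap.range (U k).mulVecLin := by
    refine le_trans ?_ (hrange k)
    rintro y ⟨v, rfl⟩
    have he : (c • M) *ᵥ v = M *ᵥ (c • v) := by
      rw [Matrix.smul_mulVec, Matrix.mulVec_smul]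
    exact ⟨c • v, by simp only [Matrix.mulVecLin_apply, he]; rfl⟩
  have hkey := key f hconc hf0 (c • M) hSpsd (hH k) (U k) (hU k) hr
  convert hkey using 2 with i
  congr 1
  rw [Matrix.mul_smul, Matrix.smul_mul]
  simp [smul_eq_mul]
  rfl
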